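/- arXiv:0708.3664 — 2 statements merged into one kernel-verified Lean document; each statement's English description precedes it below -/
import Mathlib

section
/- Let f : X \to Y be \epsilon-equidistributed between finite nonempty sets. Then for every subset X_0 \subseteq X, |f(X_0)|/|Y| \ge |X_0|/|X| - 3\epsilon. -/
open Finset

theorem stmt_8 (X Y : Type*) [Fintype X] [Fintype Y] [Nonempty X] [Nonempty Y]
    [DecidableEq Y] (f : X → Y) (ε : ℝ) (hε : 0 < ε)
    (hequi : ∃ Y' : Finset Y, (1 - ε) * (Fintype.card Y : ℝ) ≤ Y'.card ∧
      ∀ y ∈ Y',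
        (1 - ε) * ((Fintype.card X : ℝ) / (Fintype.card Y : ℝ)) ≤
          ((Finset.univ.filter fun x => f x = y).card : ℝ) ∧
        ((Finset.univ.filter fun x => f x = y).card : ℝ) ≤
          (1 + ε) * ((Fintype.card X : ℝ) / (Fintype.card Y : ℝ)))
    (X₀ : Finset X) :
    ((X₀.image f).card : ℝ) / (Fintype.card Y : ℝ) ≥
      (X₀.card : ℝ) / (Fintype.card X : ℝ) - 3 * ε := by
  obtain ⟨Y', hY'card, hY'⟩ := hequi
  set x : ℝ := (Fintype.card X : ℝ) with hxdef
  set yc : ℝ := (Fintype.card Y : ℝ) with hycdef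
  have hx : 0 < x := by rw [hxdef]; exact_mod_cast Fintype.card_pos
  have hy : 0 < yc := by rw [hycdef]; exact_mod_cast Fintype.card_pos
  set I : Finset Y := X₀.image f with hIdef
  rcases le_or_gt ((X₀.card : ℝ) / x) (3 * ε) with h | h
  · have h0 : (0:ℝ) ≤ (I.card : ℝ) / yc := by positivity
    linarith
  · have hXr : (X₀.card : ℝ) / x ≤ 1 := by
      rw [div_le_one hx, hxdef]
      exact_mod_cast Finset.card_le_univ X₀
    have hε1 : ε < 1 := by linarith
    set p : ℝ := x / yc with hpdef
    have hp : p * yc = x := div_mul_cancel₀ x (ne_of_gt hy)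
    have hppos : 0 < p := div_pos hx hy
    set F : Y → ℕ := fun y => (Finset.univ.filter fun x => f x = y).card with hFdef
    have hsumX : ∑ y ∈ Finset.univ, (F y : ℝ) = x := by
      rw [hxdef, ← Finset.card_univ,
        Finset.card_eq_sum_card_fiberwise (fun a _ => Finset.mem_univ (f a))]
      push_cast
      rfl
    have hX0 : (X₀.card : ℝ) ≤ ∑ y ∈ I, (F y : ℝ) := by
      have : X₀.card ≤ ∑ y ∈ I, F y := by
        rw [Finset.card_eq_sum_card_fiberwise
          (fun a ha => Finset.mem_image_of_mem f ha)]
        exact Finset.sum_le_sum fun y _ =>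
          Finset.card_le_card (Finset.filter_subset_filter _ (Finset.subset_univ _))
      exact_mod_cast this
    have hsplit : ∑ y ∈ I, (F y : ℝ) ≤
        ∑ y ∈ I ∩ Y', (F y : ℝ) + ∑ y ∈ Finset.univ \ Y', (F y : ℝ) := by
      rw [← Finset.sum_inter_add_sum_sdiff I Y' _]
      have hsub : I \ Y' ⊆ Finset.univ \ Y' :=
        Finset.sdiff_subset_sdiff (Finset.subset_univ I) le_rfl
      have := Finset.sum_le_sum_of_subset_of_nonneg hsub
        (fun y _ _ => by positivity : ∀ y ∈ Finset.univ \ Y',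
          y ∉ I \ Y' → (0:ℝ) ≤ (F y : ℝ))
      linarith
    have hsdiff : ∑ y ∈ Finset.univ \ Y', (F y : ℝ) + ∑ y ∈ Y', (F y : ℝ) = x := by
      rw [Finset.sum_sdiff (Finset.subset_univ Y')]
      exact hsumX
    have hYin : (1 - ε) * yc * ((1 - ε) * p) ≤ ∑ y ∈ Y', (F y : ℝ) := by
      have h1 : ((Y'.card : ℝ)) * ((1 - ε) * p) ≤ ∑ y ∈ Y', (F y : ℝ) := by
        have := Finset.card_nsmul_le_sum Y' (fun y => (F y : ℝ)) ((1 - ε) * p)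
          (fun y hy => (hY' y hy).1)
        simpa [nsmul_eq_mul] using this
      have hnn : (0:ℝ) ≤ (1 - ε) * p := by
        apply mul_nonneg (by linarith) hppos.le
      nlinarith [hY'card]
    have hIin : ∑ y ∈ I ∩ Y', (F y : ℝ) ≤ (I.card : ℝ) * ((1 + ε) * p) := by
      have h1 : ∑ y ∈ I ∩ Y', (F y : ℝ) ≤ ((I ∩ Y').card : ℝ) * ((1 + ε) * p) := by
        have := Finset.sum_le_card_nsmul (I ∩ Y') (fun y => (F y : ℝ)) ((1 + ε) * p)
          (fun y hy => (hY' y (Finset.mem_inter.mp hy).2).2)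
        simpa [nsmul_eq_mul] using this
      have h2 : ((I ∩ Y').card : ℝ) ≤ (I.card : ℝ) := by
        exact_mod_cast Finset.card_le_card Finset.inter_subset_left
      have hnn : (0:ℝ) ≤ (1 + ε) * p := by positivity
      nlinarith
    have hi : (I.card : ℝ) ≤ yc := by
      rw [hycdef]
      exact_mod_cast Finset.card_le_univ I
    have key : ((X₀.card : ℝ) - 3 * ε * x) * yc ≤ (I.card : ℝ) * x := by
      have hmain : (X₀.card : ℝ) ≤ (I.card : ℝ) * ((1 + ε) * p) + (x - (1 - ε) * yc * ((1 - ε) * p)) := by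
        linarith
      nlinarith [mul_le_mul_of_nonneg_right hmain hy.le, hp,
        mul_nonneg (mul_nonneg hε.le hx.le) (sub_nonneg.mpr hi),
        mul_nonneg (mul_nonneg hε.le hε.le) (mul_nonneg hx.le hy.le)]
    rw [ge_iff_le, show (X₀.card : ℝ) / x - 3 * ε = ((X₀.card : ℝ) - 3 * ε * x) / x by
      field_simp, div_le_div_iff₀ hx hy]
    exact key
end

section
/- Let n \ge 1 and f \ge 1. The probability that a uniformly random permutation g \in S_n has at least f fixed points is at most 2/f!. -/
open Finset

lemma aux_card_fix (n : ℕ) (S : Finset (Fin n)) :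
    (Finset.univ.filter (fun g : Equiv.Perm (Fin n) => ∀ i ∈ S, g i = i)).card
      = Nat.factorial (n - S.card) := by
  rw [← Fintype.card_subtype]
  have e1 : {g : Equiv.Perm (Fin n) // ∀ i ∈ S, g i = i} ≃
      {g : Equiv.Perm (Fin n) // ∀ a, ¬ (a ∉ S) → g a = a} :=
    Equiv.subtypeEquivRight (by intro g; simp)
  have e2 := (Equiv.Perm.subtypeEquivSubtypePerm (fun i : Fin n => i ∉ S)).symm
  rw [Fintype.card_congr (e1.trans e2)]
  rw [Fintype.card_perm]
  congr 1
  rw [Fintype.card_subtype_compl, Fintype.card_fin, Fintype.card_coe]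

theorem stmt_19 (n f : ℕ) (hn : 1 ≤ n) (hf : 1 ≤ f) :
    ((Finset.univ.filter
        (fun g : Equiv.Perm (Fin n) =>
          f ≤ (Finset.univ.filter fun i => g i = i).card)).card : ℝ) /
        (Nat.factorial n : ℝ) ≤ 2 / (Nat.factorial f : ℝ) := by
  have hfpos : (0:ℝ) < Nat.factorial f := by positivity
  have hnpos : (0:ℝ) < Nat.factorial n := by positivity
  by_cases hfn : f ≤ n
  · -- key counting bound
    have hsub : (Finset.univ.filter
        (fun g : Equiv.Perm (Fin n) =>
          f ≤ (Finset.univ.filter fun i => g i = i).card)) ⊆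
        (Finset.univ.powersetCard f).biUnion
          (fun S => Finset.univ.filter (fun g : Equiv.Perm (Fin n) => ∀ i ∈ S, g i = i)) := by
      intro g hg
      simp only [Finset.mem_filter, Finset.mem_univ, true_and] at hg
      obtain ⟨S, hS, hScard⟩ := Finset.exists_subset_card_eq hg
      simp only [Finset.mem_biUnion, Finset.mem_powersetCard, Finset.mem_filter,
        Finset.mem_univ, true_and]
      refine ⟨S, ⟨Finset.subset_univ S, hScard⟩, fun i hi => ?_⟩
      have := hS hi
      simpa using (Finset.mem_filter.mp this).2
    have hcard : (Finset.univ.filter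
        (fun g : Equiv.Perm (Fin n) =>
          f ≤ (Finset.univ.filter fun i => g i = i).card)).card
        ≤ Nat.choose n f * Nat.factorial (n - f) := by
      calc _ ≤ ((Finset.univ.powersetCard f).biUnion
              (fun S => Finset.univ.filter (fun g : Equiv.Perm (Fin n) => ∀ i ∈ S, g i = i))).card :=
            Finset.card_le_card hsub
        _ ≤ ∑ S ∈ Finset.univ.powersetCard f,
              (Finset.univ.filter (fun g : Equiv.Perm (Fin n) => ∀ i ∈ S, g i = i)).card :=
            Finset.card_biUnion_le
        _ = ∑ S ∈ Finset.univ.powersetCard f, Nat.factorial (n - f) := by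
            apply Finset.sum_congr rfl
            intro S hS
            rw [aux_card_fix, (Finset.mem_powersetCard.mp hS).2]
        _ = Nat.choose n f * Nat.factorial (n - f) := by
            rw [Finset.sum_const, Finset.card_powersetCard, Finset.card_univ,
              Fintype.card_fin, smul_eq_mul]
    have hkey : (Finset.univ.filter
        (fun g : Equiv.Perm (Fin n) =>
          f ≤ (Finset.univ.filter fun i => g i = i).card)).card * Nat.factorial f
        ≤ Nat.factorial n := by
      calc _ ≤ Nat.choose n f * Nat.factorial (n - f) * Nat.factorial f :=
            Nat.mul_le_mul_right _ hcard
        _ = Nat.factorial n := by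
            rw [mul_right_comm]
            exact Nat.choose_mul_factorial_mul_factorial hfn
    rw [div_le_div_iff₀ hnpos hfpos]
    calc ((Finset.univ.filter
        (fun g : Equiv.Perm (Fin n) =>
          f ≤ (Finset.univ.filter fun i => g i = i).card)).card : ℝ) * Nat.factorial f
          ≤ (Nat.factorial n : ℝ) := by exact_mod_cast hkey
      _ ≤ 2 * Nat.factorial n := by linarith
  · -- f > n : no permutation has f fixed points
    have : (Finset.univ.filter
        (fun g : Equiv.Perm (Fin n) =>
          f ≤ (Finset.univ.filter fun i => g i = i).card)) = ∅ := by
      apply Finset.filter_false_of_mem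
      intro g _
      push_neg
      calc (Finset.univ.filter fun i => g i = i).card ≤ (Finset.univ : Finset (Fin n)).card :=
            Finset.card_le_card (Finset.filter_subset _ _)
        _ = n := by rw [Finset.card_univ, Fintype.card_fin]
        _ < f := lt_of_not_ge hfn
    rw [this]
    simp
    positivity
end
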